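/- Let e be a restitution coefficient in class 𝒞₀ (absolutely continuous non-increasing e : ℝ₊ → (0,1], r e(r) strictly increasing, e(0)=1). Define Π_e : ℝ³ → ℝ³ by Π_e(w) = β_e(|w|) w where β_e(r) = (1+e(r))/2. Then for any δ > 0, Π_e is a diffeomorphism from the cone Ω_δ onto itself, its inverse is π_e(z) = (α_e(|z|)/|z|) z where α_e is the inverse of r ↦ r β_e(r), and its Jacobian determinant equals 𝒥_e(|z|) = (1/2)(1 + ϑ_e'(α_e(|z|))) β_e²(α_e(|z|)). -/

import Mathlib

open Real Set MeasureTheory RealInnerProductSpace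

abbrev E3 := EuclideanSpace ℝ (Fin 3)

/-- The cone `Ω_δ(σ) = {u ≠ 0 : û·σ > δ - 1}`. -/
def cone (σ : E3) (δ : ℝ) : Set E3 :=
  {u : E3 | u ≠ 0 ∧ ⟪u, σ⟫ / ‖u‖ > δ - 1}

/-- The map `Π_e(w) = β_e(|w|) w` with `β_e(r) = (1+e(r))/2`. -/
noncomputable def PiMap (e : ℝ → ℝ) (w : E3) : E3 := ((1 + e ‖w‖) / 2) • w

/-- Its inverse `π_e(z) = (α_e(|z|)/|z|) z`. -/
noncomputable def piInv (αe : ℝ → ℝ) (z : E3) : E3 := (αe ‖z‖ / ‖z‖) • z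

lemma myHasFDerivAt_norm {x : E3} (hx : x ≠ 0) :
    HasFDerivAt (fun w : E3 => ‖w‖) (‖x‖⁻¹ • innerSL ℝ x) x := by
  have hx' : ‖x‖ ≠ 0 := norm_ne_zero_iff.2 hx
  have hsq : ‖x‖ ^ 2 ≠ 0 := pow_ne_zero _ hx'
  have h1 : HasFDerivAt (fun w : E3 => Real.sqrt (‖w‖ ^ 2))
      ((1 / (2 * Real.sqrt (‖x‖ ^ 2))) • (2 • innerSL ℝ x)) x :=
    (Real.hasDerivAt_sqrt hsq).comp_hasFDerivAt x (hasStrictFDerivAt_norm_sq x).hasFDerivAt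
  have heq : (fun w : E3 => Real.sqrt (‖w‖ ^ 2)) = fun w : E3 => ‖w‖ := by
    funext w; rw [Real.sqrt_sq (norm_nonneg _)]
  rw [heq] at h1
  convert h1 using 1 <;> try rfl
  rw [Real.sqrt_sq (norm_nonneg _)]
  ext v
  simp [smul_smul]
  field_simp

lemma e_hasDerivAt (e : ℝ → ℝ) {r : ℝ} (hr : 0 < r)
    (hd : DifferentiableAt ℝ (fun s => s * e s) r) :
    HasDerivAt e ((deriv (fun s => s * e s) r - e r) / r) r := by
  have hθ : HasDerivAt (fun s => s * e s) (deriv (fun s => s * e s) r) r := hd.hasDerivAt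
  have h2 : HasDerivAt (fun s => (s * e s) / s)
      ((deriv (fun s => s * e s) r * r - (r * e r) * 1) / r ^ 2) r :=
    hθ.div (hasDerivAt_id r) hr.ne'
  have hev : e =ᶠ[nhds r] (fun s => (s * e s) / s) := by
    filter_upwards [eventually_ne_nhds hr.ne'] with s hs
    rw [mul_comm, mul_div_assoc, div_self hs, mul_one]
  have h3 := h2.congr_of_eventuallyEq hev
  convert h3 using 1 <;> try rfl
  field_simp

noncomputable def Tmap (c a : ℝ) (w : E3) : E3 →L[ℝ] E3 :=
  c • ContinuousLinearMap.id ℝ E3 + (a • innerSL ℝ w).smulRight w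

lemma piMap_hasFDerivAt (e : ℝ → ℝ) {w : E3} (hw : w ≠ 0)
    (hd : DifferentiableAt ℝ (fun s => s * e s) ‖w‖) :
    HasFDerivAt (PiMap e)
      (Tmap ((1 + e ‖w‖) / 2)
        ((deriv (fun s => s * e s) ‖w‖ - e ‖w‖) / (2 * ‖w‖ ^ 2)) w) w := by
  have hr : (0:ℝ) < ‖w‖ := norm_pos_iff.2 hw
  have hN := myHasFDerivAt_norm hw
  have he := (e_hasDerivAt e hr hd).comp_hasFDerivAt w hN
  have hg : HasFDerivAt (fun v : E3 => (1 + e ‖v‖) / 2)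
      ((1/2 : ℝ) • (((deriv (fun s => s * e s) ‖w‖ - e ‖w‖) / ‖w‖) •
        (‖w‖⁻¹ • innerSL ℝ w))) w := by
    have h' := HasFDerivAt.const_mul (he.const_add 1) (1/2 : ℝ)
    have hfun : (fun v : E3 => (1 + e ‖v‖) / 2)
        = fun v => (1/2 : ℝ) * (1 + (e ∘ norm) v) := by
      funext v; simp [Function.comp]; ring
    rw [hfun]; exact h'
  have hfull := hg.smul (hasFDerivAt_id w)
  convert hfull using 1 <;> try rfl
  have hr' : ‖w‖ ≠ 0 := hr.ne'
  ext v i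
  simp [Tmap, PiMap, smul_smul, ContinuousLinearMap.smulRight_apply]
  field_simp [pow_two]
  simp

lemma det_Tmap (c a : ℝ) {w : E3} (hw : w ≠ 0) :
    (Tmap c a w).det = (c + a * ‖w‖ ^ 2) * c ^ 2 := by
  have hr : (0:ℝ) < ‖w‖ := norm_pos_iff.2 hw
  have hr' : ‖w‖ ≠ 0 := hr.ne'
  set u : E3 := ‖w‖⁻¹ • w with hu
  have hcard : Module.finrank ℝ E3 = Fintype.card (Fin 3) := by
    simp [finrank_euclideanSpace]
  have honb : Orthonormal ℝ (({0} : Set (Fin 3)).restrict (fun _ : Fin 3 => u)) := by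
    constructor
    · intro i
      simp only [Set.restrict_apply, Set.restrict, Set.domRestrict_apply, hu, norm_smul, norm_inv, norm_norm]
      field_simp
    · intro i j hij
      exact absurd (Subtype.ext (by
        have hi := i.2; have hj := j.2
        simp only [Set.mem_singleton_iff] at hi hj
        rw [hi, hj])) hij
  obtain ⟨b, hb⟩ := honb.exists_orthonormalBasis_extension_of_card_eq hcard
  have hb0 : b 0 = u := hb 0 rfl
  have hwu : w = ‖w‖ • b 0 := by rw [hb0, hu, smul_smul]; field_simp; rw [one_smul]
  have hbij : ∀ i j : Fin 3, ⟪b i, b j⟫ = if i = j then (1:ℝ) else 0 :=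
    fun i j => orthonormal_iff_ite.mp b.orthonormal i j
  have hdet : (Tmap c a w).det
      = LinearMap.det ((Tmap c a w : E3 →L[ℝ] E3) : E3 →ₗ[ℝ] E3) := rfl
  rw [hdet, ← LinearMap.det_toMatrix b.toBasis]
  have hM : (LinearMap.toMatrix b.toBasis b.toBasis
        ((Tmap c a w : E3 →L[ℝ] E3) : E3 →ₗ[ℝ] E3))
      = Matrix.diagonal (fun i => if i = 0 then c + a * ‖w‖ ^ 2 else c) := by
    ext i j
    rw [LinearMap.toMatrix_apply]
    have hrepr : ∀ (x : E3), b.toBasis.repr x i = ⟪b i, x⟫ := by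
      intro x
      rw [b.coe_toBasis_repr_apply, b.repr_apply_apply]
    rw [OrthonormalBasis.coe_toBasis, ContinuousLinearMap.coe_coe, hrepr]
    have : (Tmap c a w) (b j) = c • b j + (a * ⟪w, b j⟫) • w := by
      simp [Tmap]
    rw [this, inner_add_right, real_inner_smul_right, real_inner_smul_right]
    have h1 : ⟪w, b j⟫ = ‖w‖ * (if 0 = j then (1:ℝ) else 0) := by
      conv_lhs => rw [hwu]
      rw [real_inner_smul_left, hbij]
    have h2 : ⟪b i, w⟫ = ‖w‖ * (if i = 0 then (1:ℝ) else 0) := by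
      conv_lhs => rw [hwu]
      rw [real_inner_smul_right, hbij]
    rw [h1, h2, hbij]
    rcases eq_or_ne i j with h | h
    · subst h
      rcases eq_or_ne i 0 with h0 | h0
      · subst h0; simp [Matrix.diagonal]; ring
      · simp [Matrix.diagonal, h0, Ne.symm h0]
    · simp only [Matrix.diagonal_apply_ne _ h, if_neg h]
      rcases eq_or_ne i 0 with h0 | h0
      · subst h0; simp [Ne.symm h]
        intro hj; exact absurd hj h
      · simp [h0]
  rw [hM, Matrix.det_diagonal, Fin.prod_univ_three]
  rw [if_pos rfl, if_neg (by decide : (1:Fin 3) ≠ 0), if_neg (by decide : (2:Fin 3) ≠ 0)]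
  ring

theorem stmt5 (e αe : ℝ → ℝ)
    (h0 : e 0 = 1)
    (hrange : ∀ r ≥ (0 : ℝ), 0 < e r ∧ e r ≤ 1)
    (hcont : ContinuousOn e (Set.Ici 0))
    (hmono : AntitoneOn e (Set.Ici 0))
    (hθ : StrictMonoOn (fun r => r * e r) (Set.Ici 0))
    (hdiff : ∀ r > (0 : ℝ), DifferentiableAt ℝ (fun s => s * e s) r)
    (hinv : ∀ r ≥ (0 : ℝ),
      αe (r * ((1 + e r) / 2)) = r ∧ αe r * ((1 + e (αe r)) / 2) = r)
    (σ : E3) (hσ : ‖σ‖ = 1) (δ : ℝ) (hδ : 0 < δ) :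
    Set.BijOn (PiMap e) (cone σ δ) (cone σ δ) ∧
    DifferentiableOn ℝ (PiMap e) (cone σ δ) ∧
    (∀ w ∈ cone σ δ, piInv αe (PiMap e w) = w) ∧
    (∀ z ∈ cone σ δ, PiMap e (piInv αe z) = z) ∧
    (∀ w ∈ cone σ δ,
      (fderiv ℝ (PiMap e) w).det
        = 1 / 2 * (1 + deriv (fun s => s * e s) (αe ‖PiMap e w‖))
            * ((1 + e (αe ‖PiMap e w‖)) / 2) ^ 2) := by
  -- positivity of the scaling factor
  have hc : ∀ r ≥ (0:ℝ), 0 < (1 + e r) / 2 := by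
    intro r hr
    have := (hrange r hr).1
    linarith
  -- norm of PiMap
  have hnorm : ∀ w : E3, w ≠ 0 → ‖PiMap e w‖ = ‖w‖ * ((1 + e ‖w‖) / 2) := by
    intro w hw
    rw [PiMap, norm_smul, Real.norm_eq_abs, abs_of_pos (hc _ (norm_nonneg w)), mul_comm]
  -- positive scalings preserve the cone
  have hscale : ∀ t : ℝ, 0 < t → ∀ u ∈ cone σ δ, t • u ∈ cone σ δ := by
    intro t ht u hu
    refine ⟨smul_ne_zero ht.ne' hu.1, ?_⟩
    rw [real_inner_smul_left, norm_smul, Real.norm_eq_abs, abs_of_pos ht,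
      mul_div_mul_left _ _ ht.ne']
    exact hu.2
  -- existence of a preimage under η, and value of αe
  have hαex : ∀ s > (0:ℝ), ∃ r > (0:ℝ), r * ((1 + e r) / 2) = s ∧ αe s = r := by
    intro s hs
    have hcontη : ContinuousOn (fun r : ℝ => r * ((1 + e r) / 2)) (Icc 0 (2 * s)) := by
      refine ContinuousOn.mul continuousOn_id ?_
      exact (continuousOn_const.add
        ((hcont.mono (Icc_subset_Ici_self)))).div_const 2
    have h2s : s ≤ (2 * s) * ((1 + e (2 * s)) / 2) := by
      have he' := (hrange (2 * s) (by positivity)).1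
      nlinarith
    have hmem : s ∈ Icc ((fun r : ℝ => r * ((1 + e r) / 2)) 0)
        ((fun r : ℝ => r * ((1 + e r) / 2)) (2 * s)) := by
      constructor
      · simpa using hs.le
      · simpa using h2s
    obtain ⟨r, hrmem, hrs⟩ := intermediate_value_Icc (by positivity) hcontη hmem
    simp only at hrs
    have hrpos : 0 < r := by
      rcases hrmem.1.lt_or_eq with h | h
      · exact h
      · exfalso
        rw [← h] at hrs
        simp at hrs
        exact hs.ne' hrs.symm
    exact ⟨r, hrpos, hrs, by rw [← hrs]; exact (hinv r hrpos.le).1⟩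
  -- PiMap maps the cone to itself
  have hPimem : ∀ w ∈ cone σ δ, PiMap e w ∈ cone σ δ := by
    intro w hw
    exact hscale _ (hc _ (norm_nonneg w)) w hw
  -- left inverse
  have hleft : ∀ w ∈ cone σ δ, piInv αe (PiMap e w) = w := by
    intro w hw
    have hw0 : w ≠ 0 := hw.1
    have hr : (0:ℝ) < ‖w‖ := norm_pos_iff.2 hw0
    have hcw := hc ‖w‖ (norm_nonneg w)
    rw [piInv, hnorm w hw0, (hinv ‖w‖ hr.le).1, PiMap, smul_smul,
      show ‖w‖ / (‖w‖ * ((1 + e ‖w‖) / 2)) * ((1 + e ‖w‖) / 2) = 1 by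
        rw [div_mul_eq_mul_div, div_eq_one_iff_eq (by positivity)], one_smul]
  -- piInv maps the cone to itself, and is a right inverse
  have hpiInvmem : ∀ z ∈ cone σ δ, piInv αe z ∈ cone σ δ := by
    intro z hz
    have hs : (0:ℝ) < ‖z‖ := norm_pos_iff.2 hz.1
    obtain ⟨r, hrpos, hηr, hαr⟩ := hαex ‖z‖ hs
    rw [piInv, hαr]
    exact hscale _ (div_pos hrpos hs) z hz
  have hright : ∀ z ∈ cone σ δ, PiMap e (piInv αe z) = z := by
    intro z hz
    have hs : (0:ℝ) < ‖z‖ := norm_pos_iff.2 hz.1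
    obtain ⟨r, hrpos, hηr, hαr⟩ := hαex ‖z‖ hs
    rw [piInv, hαr]
    have hnormv : ‖(r / ‖z‖) • z‖ = r := by
      rw [norm_smul, Real.norm_eq_abs, abs_of_pos (div_pos hrpos hs)]
      field_simp
    rw [PiMap, hnormv, smul_smul,
      show (1 + e r) / 2 * (r / ‖z‖) = 1 by
        rw [show (1 + e r) / 2 * (r / ‖z‖) = (r * ((1 + e r) / 2)) / ‖z‖ by ring,
          hηr, div_self hs.ne'], one_smul]
  -- differentiability
  have hdiffOn : DifferentiableOn ℝ (PiMap e) (cone σ δ) := by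
    intro w hw
    have hr : (0:ℝ) < ‖w‖ := norm_pos_iff.2 hw.1
    exact (piMap_hasFDerivAt e hw.1 (hdiff ‖w‖ hr)).differentiableAt.differentiableWithinAt
  refine ⟨⟨hPimem, ?_, ?_⟩, hdiffOn, hleft, hright, ?_⟩
  · -- injectivity
    intro w hw w' hw' h
    rw [← hleft w hw, h, hleft w' hw']
  · -- surjectivity
    intro z hz
    exact ⟨piInv αe z, hpiInvmem z hz, hright z hz⟩
  · -- determinant
    intro w hw
    have hw0 : w ≠ 0 := hw.1
    have hr : (0:ℝ) < ‖w‖ := norm_pos_iff.2 hw0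
    have hα : αe ‖PiMap e w‖ = ‖w‖ := by
      rw [hnorm w hw0]; exact (hinv ‖w‖ hr.le).1
    rw [(piMap_hasFDerivAt e hw0 (hdiff ‖w‖ hr)).fderiv, det_Tmap _ _ hw0, hα]
    have hr' : ‖w‖ ≠ 0 := hr.ne'
    field_simp
    ring
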